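/- Let M be a real m × m block lower-triangular matrix M = [[A, 0], [C, B]], where A is a k × k diagonal matrix with diagonal entries a_1, …, a_k, C is an arbitrary (m−k) × k real matrix, and B = D·S, where D is an (m−k) × (m−k) diagonal matrix with strictly positive diagonal entries and S is a real symmetric negative semidefinite (m−k) × (m−k) matrix. Then M has a complex eigenvalue with strictly positive real part if and only if a_i > 0 for some i ∈ {1, …, k}. -/
import Mathlib


open Matrix Polynomial

lemma my_eval_charpoly {n : Type*} [Fintype n] [DecidableEq n] {R : Type*} [CommRing R]
    (M : Matrix n n R) (μ : R) :
    M.charpoly.eval μ = (Matrix.diagonal (fun _ => μ) - M).det := by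
  rw [Matrix.charpoly, ← Polynomial.coe_evalRingHom, RingHom.map_det]
  congr 1
  ext i j
  by_cases h : i = j <;>
    simp [Matrix.charmatrix_apply, Matrix.diagonal_apply, h]

lemma my_root_iff {n : Type*} [Fintype n] [DecidableEq n]
    (M : Matrix n n ℂ) (μ : ℂ) :
    M.charpoly.IsRoot μ ↔ ∃ v, v ≠ 0 ∧ M.mulVec v = μ • v := by
  rw [Polynomial.IsRoot, my_eval_charpoly, ← Matrix.exists_mulVec_eq_zero_iff]
  constructor
  · rintro ⟨v, hv, h0⟩
    refine ⟨v, hv, ?_⟩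
    have hd : (Matrix.diagonal (fun _ : n => μ)).mulVec v = μ • v := by
      funext i; simp [Matrix.mulVec_diagonal]
    rw [Matrix.sub_mulVec, sub_eq_zero, hd] at h0
    exact h0.symm
  · rintro ⟨v, hv, h0⟩
    refine ⟨v, hv, ?_⟩
    have hd : (Matrix.diagonal (fun _ : n => μ)).mulVec v = μ • v := by
      funext i; simp [Matrix.mulVec_diagonal]
    rw [Matrix.sub_mulVec, sub_eq_zero, hd, h0]

lemma my_key_re_nonpos {l : ℕ} (d : Fin l → ℝ) (hd : ∀ i, 0 < d i)
    (S : Matrix (Fin l) (Fin l) ℝ)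
    (hnsd : ∀ x : Fin l → ℝ, S.mulVec x ⬝ᵥ x ≤ 0)
    (μ : ℂ)
    (h : ((Matrix.diagonal d * S).map (fun r : ℝ => (r : ℂ))).charpoly.IsRoot μ) :
    μ.re ≤ 0 := by
  rw [my_root_iff] at h
  obtain ⟨v, hv, hEq⟩ := h
  set Sc : Matrix (Fin l) (Fin l) ℂ := S.map (fun r : ℝ => (r : ℂ)) with hSc
  have hcomp : ∀ i, (d i : ℂ) * (Sc.mulVec v) i = μ * v i := by
    intro i
    have h1 := congrFun hEq i
    simp only [Matrix.mulVec, dotProduct, Matrix.map_apply, Matrix.diagonal_mul,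
      Pi.smul_apply, smul_eq_mul, hSc, Complex.ofReal_mul] at h1 ⊢
    rw [Finset.mul_sum]
    simpa [mul_assoc] using h1
  set x : Fin l → ℝ := fun i => (v i).re with hx
  set y : Fin l → ℝ := fun i => (v i).im with hy
  set q : ℂ := ∑ i, (starRingEnd ℂ) (v i) * (Sc.mulVec v) i with hqdef
  have hqre : q.re = S.mulVec x ⬝ᵥ x + S.mulVec y ⬝ᵥ y := by
    simp only [hqdef, Complex.re_sum, dotProduct, Matrix.mulVec, hSc, Matrix.map_apply]
    rw [← Finset.sum_add_distrib]
    refine Finset.sum_congr rfl fun i _ => ?_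
    simp only [Complex.mul_re, Complex.conj_re, Complex.conj_im, Complex.re_sum, Complex.im_sum,
      Complex.re_ofReal_mul, Complex.im_ofReal_mul, Complex.ofReal_re, Complex.ofReal_im, zero_mul, sub_zero,
      hx, hy]
    ring
  set p : ℝ := ∑ i, (d i)⁻¹ * Complex.normSq (v i) with hpdef
  have hp : 0 < p := by
    have hvne : ∃ i, v i ≠ 0 := by
      by_contra hcon
      push_neg at hcon
      exact hv (funext hcon)
    obtain ⟨i, hi⟩ := hvne
    refine Finset.sum_pos' (fun j _ => ?_) ⟨i, Finset.mem_univ i, ?_⟩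
    · exact mul_nonneg (inv_nonneg.2 (hd j).le) (Complex.normSq_nonneg _)
    · exact mul_pos (inv_pos.2 (hd i)) (Complex.normSq_pos.2 hi)
  have hq : q = μ * (p : ℂ) := by
    have hterm : ∀ i, (starRingEnd ℂ) (v i) * (Sc.mulVec v) i
        = μ * ((d i : ℂ)⁻¹ * (Complex.normSq (v i) : ℂ)) := by
      intro i
      have hdi : (d i : ℂ) ≠ 0 := by
        exact_mod_cast (hd i).ne'
      apply mul_left_cancel₀ hdi
      calc (d i : ℂ) * ((starRingEnd ℂ) (v i) * (Sc.mulVec v) i)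
          = (starRingEnd ℂ) (v i) * ((d i : ℂ) * (Sc.mulVec v) i) := by ring
        _ = (starRingEnd ℂ) (v i) * (μ * v i) := by rw [hcomp i]
        _ = μ * (v i * (starRingEnd ℂ) (v i)) := by ring
        _ = μ * (Complex.normSq (v i) : ℂ) := by rw [Complex.mul_conj]
        _ = (d i : ℂ) * (μ * ((d i : ℂ)⁻¹ * (Complex.normSq (v i) : ℂ))) := by
            field_simp
    rw [hqdef]
    rw [Finset.sum_congr rfl fun i _ => hterm i, ← Finset.mul_sum]
    congr 1
    rw [hpdef]
    push_cast
    rfl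
  have h1 : q.re ≤ 0 := by
    rw [hqre]
    exact add_nonpos (hnsd x) (hnsd y)
  have h2 : q.re = μ.re * p := by
    rw [hq]
    simp
  nlinarith [hp, h1, h2]

/-- Let `M = [[A, 0], [C, B]]` be block lower-triangular, where
`A = diagonal a` is `k × k` diagonal, `C` is arbitrary, and `B = D * S` with `D` diagonal with
strictly positive diagonal entries and `S` real symmetric negative semidefinite. Then `M` has a
complex eigenvalue with strictly positive real part iff `a_i > 0` for some `i`. -/
theorem block_triangular_positive_eigenvalue_iff
    {k l : ℕ}
    (a : Fin k → ℝ)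
    (C : Matrix (Fin l) (Fin k) ℝ)
    (d : Fin l → ℝ) (hd : ∀ i, 0 < d i)
    (S : Matrix (Fin l) (Fin l) ℝ) (hS : S.IsSymm)
    (hnsd : ∀ x : Fin l → ℝ, S.mulVec x ⬝ᵥ x ≤ 0)
    (M : Matrix (Fin k ⊕ Fin l) (Fin k ⊕ Fin l) ℝ)
    (hM : M = Matrix.fromBlocks (Matrix.diagonal a) 0 C (Matrix.diagonal d * S)) :
    (∃ μ : ℂ, ((M.map (fun r : ℝ => (r : ℂ))).charpoly.IsRoot μ) ∧ 0 < μ.re) ↔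
      ∃ i, 0 < a i := by
  subst hM
  have hmap : (Matrix.fromBlocks (Matrix.diagonal a) 0 C
      (Matrix.diagonal d * S)).map (fun r : ℝ => (r : ℂ)) =
      Matrix.fromBlocks (Matrix.diagonal (fun i => (a i : ℂ))) 0
        (C.map (fun r : ℝ => (r : ℂ)))
        ((Matrix.diagonal d * S).map (fun r : ℝ => (r : ℂ))) := by
    rw [Matrix.fromBlocks_map, Matrix.map_zero _ (by simp), Matrix.diagonal_map (by simp)]
  have hcp : ((Matrix.fromBlocks (Matrix.diagonal a) 0 C
      (Matrix.diagonal d * S)).map (fun r : ℝ => (r : ℂ))).charpoly =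
      (Matrix.diagonal (fun i => (a i : ℂ))).charpoly *
        ((Matrix.diagonal d * S).map (fun r : ℝ => (r : ℂ))).charpoly := by
    rw [hmap, Matrix.charpoly_fromBlocks_zero₁₂]
  have hdiag : ∀ μ : ℂ, (Matrix.diagonal (fun i => (a i : ℂ))).charpoly.IsRoot μ ↔
      ∃ i, μ = (a i : ℂ) := by
    intro μ
    rw [Polynomial.IsRoot, my_eval_charpoly, Matrix.diagonal_sub, Matrix.det_diagonal,
      Finset.prod_eq_zero_iff]
    simp [sub_eq_zero]
  constructor
  · rintro ⟨μ, hroot, hre⟩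
    rw [Polynomial.IsRoot, hcp, Polynomial.eval_mul, mul_eq_zero] at hroot
    rcases hroot with hA | hB
    · obtain ⟨i, hi⟩ := (hdiag μ).1 hA
      refine ⟨i, ?_⟩
      have : μ.re = a i := by rw [hi]; simp
      linarith
    · have := my_key_re_nonpos d hd S hnsd μ hB
      linarith
  · rintro ⟨i, hi⟩
    refine ⟨(a i : ℂ), ?_, by simpa using hi⟩
    rw [Polynomial.IsRoot, hcp, Polynomial.eval_mul, mul_eq_zero]
    left
    exact (hdiag _).2 ⟨i, rfl⟩
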